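/- Suppose A satisfies: no nonzero x has Ax ≥ 0 (boundedness condition), working over ℝ. Then for every I ⊆ {1,…,p}, the set Ω_I(ℝ) = {(δ,ε) ∈ ℝ² | ∃ x ∈ ℝⁿ, A_I x = D_I(δ,ε), Ax ≥ D(δ,ε)} is closed in ℝ². -/

import Mathlib

/-- The real version of the family `D(δ,ε) = (1-δ)B + δB' + εC`. -/
def DvecR {p : ℕ} (B B' C : Fin p → ℚ) (q : ℝ × ℝ) : Fin p → ℝ :=
  fun i => (1 - q.1) * (B i : ℝ) + q.1 * (B' i : ℝ) + q.2 * (C i : ℝ)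

/-- If no nonzero real vector `x` satisfies `Ax ≥ 0`, then for every
`I ⊆ {1,…,p}` the set `Ω_I(ℝ)` is closed in ℝ². -/
theorem stmt_6 (p n : ℕ) (A : Matrix (Fin p) (Fin n) ℚ) (B B' C : Fin p → ℚ)
    (hbdd : ¬ ∃ x : Fin n → ℝ, x ≠ 0 ∧
      ∀ i, 0 ≤ (A.map ((↑) : ℚ → ℝ)).mulVec x i)
    (I : Set (Fin p)) :
    IsClosed {q : ℝ × ℝ | ∃ x : Fin n → ℝ,
      (∀ i ∈ I, (A.map ((↑) : ℚ → ℝ)).mulVec x i = DvecR B B' C q i) ∧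
      ∀ i, DvecR B B' C q i ≤ (A.map ((↑) : ℚ → ℝ)).mulVec x i} := by
  set A' := A.map ((↑) : ℚ → ℝ) with hA'
  have hcont : Continuous fun x : Fin n → ℝ => A'.mulVec x := by
    have := A'.mulVecLin.continuous_of_finiteDimensional
    exact this
  have hconti : ∀ i, Continuous fun x : Fin n → ℝ => A'.mulVec x i :=
    fun i => (continuous_apply i).comp hcont
  have hD : ∀ i, Continuous fun q : ℝ × ℝ => DvecR B B' C q i := by
    intro i; unfold DvecR; fun_prop
  -- feasible sets with arbitrary lower bound are bounded
  have hbd : ∀ c : Fin p → ℝ,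
      Bornology.IsBounded {x : Fin n → ℝ | ∀ i, c i ≤ A'.mulVec x i} := by
    intro c
    by_contra hub
    rw [isBounded_iff_forall_norm_le] at hub
    push_neg at hub
    choose x hx hnx using fun k : ℕ => hub (k : ℝ)
    have hxpos : ∀ k, (0:ℝ) < ‖x k‖ := fun k =>
      lt_of_le_of_lt (Nat.cast_nonneg k) (hnx k)
    set y : ℕ → Fin n → ℝ := fun k => ‖x k‖⁻¹ • x k with hy
    have hys : ∀ k, y k ∈ Metric.sphere (0 : Fin n → ℝ) 1 := by
      intro k
      simp only [Metric.mem_sphere, dist_zero_right, hy, norm_smul, norm_inv,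
        norm_norm]
      exact inv_mul_cancel₀ (ne_of_gt (hxpos k))
    obtain ⟨z, hz, φ, hφ, hconv⟩ :=
      (isCompact_sphere (0 : Fin n → ℝ) 1).tendsto_subseq hys
    apply hbdd
    refine ⟨z, ?_, ?_⟩
    · intro h0
      rw [h0] at hz
      simp at hz
    · intro i
      have hlim : Filter.Tendsto (fun k => A'.mulVec (y (φ k)) i)
          Filter.atTop (nhds (A'.mulVec z i)) :=
        ((hconti i).tendsto z).comp hconv
      have hnorm_top : Filter.Tendsto (fun k => ‖x (φ k)‖) Filter.atTop Filter.atTop := by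
        exact Filter.tendsto_atTop_mono
          (fun k => le_trans (Nat.cast_le.2 (hφ.id_le k)) (le_of_lt (hnx (φ k))))
          tendsto_natCast_atTop_atTop
      have hinv0 : Filter.Tendsto (fun k => ‖x (φ k)‖⁻¹) Filter.atTop (nhds 0) :=
        Filter.Tendsto.comp tendsto_inv_atTop_zero hnorm_top
      have hg0 : Filter.Tendsto (fun k => ‖x (φ k)‖⁻¹ * c i) Filter.atTop (nhds 0) := by
        have := hinv0.mul_const (c i)
        simpa using this
      refine le_of_tendsto_of_tendsto hg0 hlim ?_
      filter_upwards with k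
      have : A'.mulVec (y (φ k)) i = ‖x (φ k)‖⁻¹ * A'.mulVec (x (φ k)) i := by
        simp [hy, Matrix.mulVec_smul]
      rw [this]
      exact mul_le_mul_of_nonneg_left (hx (φ k) i) (le_of_lt (inv_pos.2 (hxpos (φ k))))
  -- sequential closedness
  apply IsSeqClosed.isClosed
  intro q l hq hlim
  choose x hxeq hxge using hq
  have hDlim : ∀ i, Filter.Tendsto (fun k => DvecR B B' C (q k) i)
      Filter.atTop (nhds (DvecR B B' C l i)) :=
    fun i => ((hD i).tendsto l).comp hlim
  have hDb : ∀ i, ∃ m : ℝ, ∀ k, m ≤ DvecR B B' C (q k) i := by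
    intro i
    obtain ⟨m, hm⟩ := (hDlim i).bddBelow_range
    exact ⟨m, fun k => hm ⟨k, rfl⟩⟩
  choose c hc using hDb
  have hmem : ∀ k, x k ∈ {x : Fin n → ℝ | ∀ i, c i ≤ A'.mulVec x i} :=
    fun k i => le_trans (hc i k) (hxge k i)
  obtain ⟨R, hR⟩ := (isBounded_iff_forall_norm_le.1 (hbd c))
  have hball : ∀ k, x k ∈ Metric.closedBall (0 : Fin n → ℝ) R := by
    intro k
    simpa [Metric.mem_closedBall, dist_zero_right] using hR _ (hmem k)
  obtain ⟨z, _, φ, hφ, hconv⟩ :=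
    (isCompact_closedBall (0 : Fin n → ℝ) R).tendsto_subseq hball
  have hAlim : ∀ i, Filter.Tendsto (fun k => A'.mulVec (x (φ k)) i)
      Filter.atTop (nhds (A'.mulVec z i)) :=
    fun i => ((hconti i).tendsto z).comp hconv
  have hDlim' : ∀ i, Filter.Tendsto (fun k => DvecR B B' C (q (φ k)) i)
      Filter.atTop (nhds (DvecR B B' C l i)) :=
    fun i => (hDlim i).comp hφ.tendsto_atTop
  refine ⟨z, ?_, ?_⟩
  · intro i hi
    refine tendsto_nhds_unique (hAlim i) ?_
    have : (fun k => A'.mulVec (x (φ k)) i) = fun k => DvecR B B' C (q (φ k)) i := by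
      funext k; exact hxeq (φ k) i hi
    rw [this]
    exact hDlim' i
  · intro i
    refine le_of_tendsto_of_tendsto (hDlim' i) (hAlim i) ?_
    filter_upwards with k
    exact hxge (φ k) i
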